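/- arXiv:2211.16446 — 3 statements merged into one kernel-verified Lean document; each statement's English description precedes it below -/
import Mathlib

section
/- If G is a finite simple graph on n vertices with minimum degree δ ≥ n/2, then every longest cycle C of G is a Hamilton cycle, i.e., the subgraph G − C is empty. -/
open SimpleGraph

/-- A "generalized cycle" of order `t` in a graph: a single vertex counts as a
cycle of order 1, an edge as a cycle of order 2, and otherwise a genuine cycle
on `t` distinct vertices. -/
def IsGenCycleOn {V : Type*} (G : SimpleGraph V) (t : ℕ) : Prop :=
  (t = 1 ∧ Nonempty V) ∨ (t = 2 ∧ ∃ u v, G.Adj u v) ∨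
    (∃ (u : V) (c : G.Walk u u), c.IsCycle ∧ c.length = t)

/-- The order of a longest generalized cycle in `G` (0 if `G` has no vertices). -/
noncomputable def cbar {V : Type*} (G : SimpleGraph V) : ℕ :=
  sSup {t | IsGenCycleOn G t}

/-- `G` is `k`-connected: more than `k` vertices, and removing fewer than `k`
vertices leaves a connected graph. -/
def KConnected {V : Type*} [Fintype V] (G : SimpleGraph V) (k : ℕ) : Prop :=
  k < Fintype.card V ∧
    ∀ S : Finset V, S.card < k → (G.induce ((↑S : Set V)ᶜ)).Connected

section Aux
variable {V : Type*} {G : SimpleGraph V}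
variable {V : Type*} {G : SimpleGraph V}

lemma support_getElem : ∀ {x y : V} (P : G.Walk x y) (i : ℕ) (h : i < P.support.length),
    P.support[i] = P.getVert i
  | x, _, .nil, 0, h => rfl
  | x, y, .cons h p, 0, _ => rfl
  | x, y, .cons h p, (i+1), hi => by
      simp only [Walk.support_cons, List.getElem_cons_succ, Walk.getVert_cons_succ]
      exact support_getElem p i (by simpa [Walk.length_support] using hi)

lemma getVert_inj {x y : V} {P : G.Walk x y} (hP : P.IsPath) {i j : ℕ}
    (hi : i ≤ P.length) (hj : j ≤ P.length) (h : P.getVert i = P.getVert j) : i = j := by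
  have hnd := hP.support_nodup
  have hi' : i < P.support.length := by rw [Walk.length_support]; omega
  have hj' : j < P.support.length := by rw [Walk.length_support]; omega
  rw [← support_getElem P i hi', ← support_getElem P j hj'] at h
  exact (hnd.getElem_inj_iff).mp h

lemma walk_split : ∀ {x y : V} (P : G.Walk x y) (i : ℕ), i < P.length →
    ∃ (b a : V) (hba : G.Adj b a) (q : G.Walk x b) (r : G.Walk a y),
      P = q.append (Walk.cons hba r) ∧ q.length = i ∧
        b = P.getVert i ∧ a = P.getVert (i + 1)
  | x, _, .nil, i, hi => by simp at hi
  | x, y, .cons (v := u) h p, 0, hi =>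
      ⟨x, u, h, Walk.nil, p, by simp, rfl, (Walk.getVert_zero _).symm,
        by rw [Walk.getVert_cons_succ, Walk.getVert_zero]⟩
  | x, y, .cons (v := u) h p, (i+1), hi => by
      obtain ⟨b, a, hba, q, r, hsplit, hlen, hb, ha⟩ :=
        walk_split p i (by simpa [Walk.length_cons] using hi)
      exact ⟨b, a, hba, Walk.cons h q, r, by rw [Walk.cons_append, hsplit],
        by simp [hlen], by rwa [Walk.getVert_cons_succ], by rwa [Walk.getVert_cons_succ]⟩

lemma boundary {Wf : Finset V} : ∀ {u z : V} (p : G.Walk u z), u ∉ Wf → z ∈ Wf →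
    ∃ a b, a ∉ Wf ∧ b ∈ Wf ∧ G.Adj a b
  | u, _, .nil, hu, hz => absurd hz hu
  | u, z, .cons (v := t) h p, hu, hz => by
      by_cases ht : t ∈ Wf
      · exact ⟨u, t, hu, ht, h⟩
      · exact boundary p ht hz

lemma rotation_cycle {x y : V} {P : G.Walk x y} (hP : P.IsPath) (hlen2 : 2 ≤ P.length)
    {i : ℕ} (hi : i < P.length)
    (hxa : G.Adj x (P.getVert (i + 1))) (hyb : G.Adj y (P.getVert i)) :
    ∃ (c : G.Walk x x), c.IsCycle ∧ c.length = P.length + 1 ∧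
      c.support.tail.Perm P.support := by
  obtain ⟨b, a, hba, q, r, hPeq, hqlen, hb, ha⟩ := walk_split P i hi
  rw [← ha] at hxa
  rw [← hb] at hyb
  have hsup : P.support = q.support ++ r.support := by
    rw [hPeq, Walk.support_append, Walk.support_cons, List.tail_cons]
  have hnd : (q.support ++ r.support).Nodup := hsup ▸ hP.support_nodup
  rw [List.nodup_append] at hnd
  obtain ⟨hndq, hndr, hdisj⟩ := hnd
  set w : G.Walk a x := r.append (Walk.cons hyb q.reverse) with hw
  have hwsup : w.support = r.support ++ q.support.reverse := by
    rw [hw, Walk.support_append, Walk.support_cons, List.tail_cons, Walk.support_reverse]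
  have hperm : w.support.Perm P.support := by
    rw [hwsup, hsup]
    exact ((q.support.reverse_perm).append_left r.support).trans List.perm_append_comm
  have hwpath : w.IsPath := by
    rw [Walk.isPath_def]
    exact (hperm.nodup_iff).mpr hP.support_nodup
  have hxq : x ∈ q.support := q.start_mem_support
  have har : a ∈ r.support := r.start_mem_support
  have hyr : y ∈ r.support := r.end_mem_support
  have hedge : s(x, a) ∉ w.edges := by
    intro hmem
    rw [hw, Walk.edges_append, Walk.edges_cons] at hmem
    rcases List.mem_append.mp hmem with hmem | hmem
    · exact hdisj x hxq x (r.fst_mem_support_of_mem_edges hmem) rfl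
    · rcases List.mem_cons.mp hmem with hmem | hmem
      · rw [Sym2.eq_iff] at hmem
        rcases hmem with ⟨hxy, -⟩ | ⟨hxb, hay⟩
        · exact hdisj x hxq x (hxy ▸ hyr) rfl
        · have h0 : (0 : ℕ) = i := by
            apply getVert_inj hP (by omega) (by omega)
            rw [Walk.getVert_zero, ← hb, hxb]
          have h1 : i + 1 = P.length := by
            apply getVert_inj hP (by omega) (by omega)
            rw [Walk.getVert_length, ← ha, hay]
          omega
      · rw [Walk.edges_reverse, List.mem_reverse] at hmem
        exact hdisj a (q.snd_mem_support_of_mem_edges hmem) a har rfl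
  refine ⟨Walk.cons hxa w, ?_, ?_, ?_⟩
  · exact (Walk.cons_isCycle_iff w hxa).mpr ⟨hwpath, hedge⟩
  · have hl : P.length = q.length + (1 + r.length) := by
      rw [hPeq, Walk.length_append, Walk.length_cons]; omega
    simp only [Walk.length_cons, hw, Walk.length_append, Walk.length_cons,
      Walk.length_reverse]
    omega
  · simpa [Walk.support_cons] using hperm

end Aux


/-- Dirac: if `δ ≥ n/2` then every longest cycle is a Hamilton cycle. -/
theorem stmt_1 {V : Type*} [Fintype V] [Nonempty V] (G : SimpleGraph V)
    [DecidableRel G.Adj]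
    (hδ : (Fintype.card V : ℚ) / 2 ≤ (G.minDegree : ℚ))
    (v : V) (C : G.Walk v v) (hC : C.IsCycle)
    (hmax : ∀ (u : V) (Q : G.Walk u u), Q.IsCycle → Q.length ≤ C.length) :
    ∀ x : V, x ∈ C.support := by
  classical
  set n := Fintype.card V with hn
  have hδn : n ≤ 2 * G.minDegree := by
    have h2 : (n : ℚ) ≤ 2 * G.minDegree := by
      rw [div_le_iff₀ (by norm_num : (0:ℚ) < 2)] at hδ
      linarith
    exact_mod_cast h2
  have hCn : C.length ≤ n := by
    have h1 := hC.support_nodup.length_le_card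
    have h2 : C.support.tail.length = C.length := by
      rw [List.length_tail, Walk.length_support]; omega
    omega
  have hn3 : 3 ≤ n := le_trans hC.three_le_length hCn
  have hdegs : ∀ z : V, n ≤ 2 * G.degree z := fun z =>
    le_trans hδn (by have := G.minDegree_le_degree z; omega)
  -- the set of path lengths
  set A : Set ℕ := {l | ∃ (a b : V) (p : G.Walk a b), p.IsPath ∧ p.length = l} with hA
  have hA0 : 0 ∈ A := ⟨v, v, Walk.nil, Walk.IsPath.nil, rfl⟩
  have hlenle : ∀ (a b : V) (p : G.Walk a b), p.IsPath → p.length + 1 ≤ n := by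
    intro a b p hp
    have := hp.support_nodup.length_le_card
    rwa [Walk.length_support] at this
  have hAbdd : BddAbove A := ⟨n, by
    rintro l ⟨a, b, p, hp, rfl⟩
    have := hlenle a b p hp; omega⟩
  set k := sSup A with hk
  obtain ⟨px, py, P, hP, hPlen⟩ : k ∈ A := Nat.sSup_mem ⟨0, hA0⟩ hAbdd
  have hmaxP : ∀ l ∈ A, l ≤ k := fun l hl => le_csSup hAbdd hl
  have hkn : k + 1 ≤ n := hPlen ▸ hlenle px py P hP
  -- k ≥ 2
  have hk2 : 2 ≤ k := by
    have hdeg : 2 ≤ G.degree v := by have := hdegs v; omega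
    rw [← card_neighborFinset_eq_degree] at hdeg
    obtain ⟨a, ha, b, hb, hab⟩ := Finset.one_lt_card.mp hdeg
    rw [mem_neighborFinset] at ha hb
    have hpath : (Walk.cons ha.symm (Walk.cons hb Walk.nil)).IsPath := by
      rw [Walk.cons_isPath_iff]
      refine ⟨?_, ?_⟩
      · rw [Walk.cons_isPath_iff]
        exact ⟨Walk.IsPath.nil, by simp [hb.ne]⟩
      · simp [Walk.support_cons, ha.ne', hab]
    have h2A : 2 ∈ A := ⟨a, b, _, hpath, by simp⟩
    exact hmaxP 2 h2A
  -- endpoints absorb their neighborhoods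
  have hnbrx : ∀ w, G.Adj px w → w ∈ P.support := by
    intro w hw
    by_contra hws
    have hpath : (Walk.cons hw.symm P).IsPath := (Walk.cons_isPath_iff _ _).mpr ⟨hP, hws⟩
    have := hmaxP (k+1) ⟨w, py, _, hpath, by simp [hPlen]⟩
    omega
  have hnbry : ∀ w, G.Adj py w → w ∈ P.support := by
    intro w hw
    by_contra hws
    have hpath : (Walk.cons hw.symm P.reverse).IsPath :=
      (Walk.cons_isPath_iff _ _).mpr ⟨hP.reverse, by
        rwa [Walk.support_reverse, List.mem_reverse]⟩
    have := hmaxP (k+1) ⟨w, px, _, hpath, by simp [hPlen]⟩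
    omega
  -- counting
  set S := (Finset.range k).filter (fun i => G.Adj px (P.getVert (i+1))) with hSdef
  set T := (Finset.range k).filter (fun i => G.Adj py (P.getVert i)) with hTdef
  have hS : G.degree px ≤ S.card := by
    rw [← card_neighborFinset_eq_degree]
    apply Finset.card_le_card_of_surjOn (fun i => P.getVert (i+1))
    intro w hw
    rw [Finset.mem_coe, mem_neighborFinset] at hw
    obtain ⟨j, hjw, hjle⟩ := Walk.mem_support_iff_exists_getVert.mp (hnbrx w hw)
    have hj0 : j ≠ 0 := by
      rintro rfl
      rw [Walk.getVert_zero] at hjw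
      exact G.irrefl (hjw ▸ hw)
    obtain ⟨i, rfl⟩ := Nat.exists_eq_succ_of_ne_zero hj0
    refine ⟨i, ?_, hjw⟩
    rw [Finset.mem_coe, hSdef, Finset.mem_filter, Finset.mem_range]
    exact ⟨by omega, hjw ▸ hw⟩
  have hT : G.degree py ≤ T.card := by
    rw [← card_neighborFinset_eq_degree]
    apply Finset.card_le_card_of_surjOn (fun i => P.getVert i)
    intro w hw
    rw [Finset.mem_coe, mem_neighborFinset] at hw
    obtain ⟨j, hjw, hjle⟩ := Walk.mem_support_iff_exists_getVert.mp (hnbry w hw)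
    have hjk : j ≠ P.length := by
      rintro rfl
      rw [Walk.getVert_length] at hjw
      exact G.irrefl (hjw ▸ hw)
    refine ⟨j, ?_, hjw⟩
    rw [Finset.mem_coe, hTdef, Finset.mem_filter, Finset.mem_range]
    exact ⟨by omega, hjw ▸ hw⟩
  have hST : (S ∩ T).Nonempty := by
    rw [← Finset.card_pos]
    have hsub : S ∪ T ⊆ Finset.range k := by
      rw [hSdef, hTdef]
      exact Finset.union_subset (Finset.filter_subset _ _) (Finset.filter_subset _ _)
    have h1 : (S ∪ T).card ≤ k := by simpa using Finset.card_le_card hsub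
    have h2 := Finset.card_union_add_card_inter S T
    have h3 := hdegs px
    have h4 := hdegs py
    omega
  obtain ⟨i, hiST⟩ := hST
  rw [Finset.mem_inter, hSdef, hTdef, Finset.mem_filter, Finset.mem_filter,
    Finset.mem_range] at hiST
  obtain ⟨⟨hik, hxa⟩, -, hyb⟩ := hiST
  -- build the rotated cycle
  obtain ⟨c, hcyc, hclen, hcperm⟩ :=
    rotation_cycle hP (hPlen ▸ hk2) (by omega : i < P.length) hxa hyb
  -- extension: P.support contains everything
  have hall : ∀ z : V, z ∈ P.support := by
    by_contra hcon
    push_neg at hcon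
    obtain ⟨w, hw⟩ := hcon
    -- connectivity
    have hreach : ∀ a b : V, G.Reachable a b := by
      intro a b
      by_cases hab : a = b
      · exact hab ▸ Reachable.refl a
      by_cases hadj : G.Adj a b
      · exact hadj.reachable
      have hnd : ¬ Disjoint (G.neighborFinset a) (G.neighborFinset b) := by
        intro hdisj
        have hsub : G.neighborFinset a ∪ G.neighborFinset b ⊆
            Finset.univ \ {a, b} := by
          intro z hz
          rw [Finset.mem_union, mem_neighborFinset, mem_neighborFinset] at hz
          rw [Finset.mem_sdiff, Finset.mem_insert, Finset.mem_singleton]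
          refine ⟨Finset.mem_univ z, ?_⟩
          push_neg
          rcases hz with hz | hz
          · exact ⟨hz.ne', fun hzb => hadj (hzb ▸ hz)⟩
          · exact ⟨fun hza => hadj (hza ▸ hz).symm, hz.ne'⟩
        have hcard := Finset.card_le_card hsub
        rw [Finset.card_union_of_disjoint hdisj] at hcard
        have hc2 : ({a, b} : Finset V).card = 2 := Finset.card_pair hab
        have hsd : (Finset.univ \ {a, b} : Finset V).card = n - 2 := by
          rw [Finset.card_sdiff_of_subset (Finset.subset_univ _), hc2, Finset.card_univ]
        have h3 := hdegs a
        have h4 := hdegs b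
        rw [← card_neighborFinset_eq_degree] at h3 h4
        omega
      obtain ⟨z, hz1, hz2⟩ := Finset.not_disjoint_iff.mp hnd
      rw [mem_neighborFinset] at hz1 hz2
      exact (hz1.reachable).trans hz2.symm.reachable
    obtain ⟨p⟩ := hreach w px
    obtain ⟨a, b, haW, hbW, hab⟩ := boundary (Wf := P.support.toFinset) p
      (by simpa using hw) (by simp [P.start_mem_support])
    rw [List.mem_toFinset] at hbW
    have haW' : a ∉ P.support := fun h => haW (List.mem_toFinset.mpr h)
    -- rotate c to start at b
    have hbc : b ∈ c.support := by
      rw [Walk.support_eq_cons]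
      exact List.mem_cons_of_mem _ (hcperm.mem_iff.mpr hbW)
    set c' := c.rotate b hbc with hc'def
    have hc'cyc : c'.IsCycle := hcyc.rotate hbc
    have hc'tail : c'.support.tail.Perm c.support.tail :=
      (Walk.support_rotate c b hbc).perm
    have hc'len : c'.length = c.length := by
      have h1 : c'.support.tail.length = c.support.tail.length := hc'tail.length_eq
      rw [List.length_tail, List.length_tail, Walk.length_support,
        Walk.length_support] at h1
      omega
    have hnotnil : ¬ c'.Nil := by
      rw [Walk.not_nil_iff_lt_length, hc'len, hclen]; omega
    obtain ⟨u2, hadj2, q2, hq2⟩ := Walk.not_nil_iff.mp hnotnil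
    have hq2path : q2.IsPath := by
      have := hq2 ▸ hc'cyc
      rw [Walk.cons_isCycle_iff] at this
      exact this.1
    have hq2sub : ∀ z, z ∈ q2.support → z ∈ P.support := by
      intro z hz
      have : z ∈ c'.support := by
        rw [hq2, Walk.support_cons]
        exact List.mem_cons_of_mem _ hz
      rw [Walk.support_eq_cons c'] at this
      rcases List.mem_cons.mp this with rfl | hmem
      · exact hbW
      · have : z ∈ c.support.tail := hc'tail.mem_iff.mp hmem
        exact hcperm.mem_iff.mp this
    have hupath : (Walk.cons hab q2.reverse).IsPath := by
      rw [Walk.cons_isPath_iff]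
      refine ⟨hq2path.reverse, fun hmem => ?_⟩
      rw [Walk.support_reverse, List.mem_reverse] at hmem
      exact haW' (hq2sub a hmem)
    have hlq2 : q2.length = k := by
      have : c'.length = q2.length + 1 := by rw [hq2, Walk.length_cons]
      rw [hc'len, hclen, hPlen] at this
      omega
    have := hmaxP (k+1) ⟨a, u2, _, hupath, by
      rw [Walk.length_cons, Walk.length_reverse, hlq2]⟩
    omega
  -- conclude
  have hcard : k + 1 = n := by
    have huniv : P.support.toFinset = Finset.univ :=
      Finset.eq_univ_iff_forall.mpr fun z => List.mem_toFinset.mpr (hall z)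
    have h1 : P.support.toFinset.card = k + 1 := by
      rw [List.toFinset_card_of_nodup hP.support_nodup, Walk.length_support, hPlen]
    rw [huniv, Finset.card_univ] at h1
    exact h1.symm
  have hCge : n ≤ C.length := by
    have := hmax px c hcyc
    rw [hclen, hPlen] at this
    omega
  -- C.support.tail covers everything
  intro x
  have hCtail : C.support.tail.length = C.length := by
    rw [List.length_tail, Walk.length_support]; omega
  have htuniv : C.support.tail.toFinset = Finset.univ := by
    apply Finset.eq_univ_of_card
    rw [List.toFinset_card_of_nodup hC.support_nodup, hCtail]
    omega
  have : x ∈ C.support.tail := by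
    rw [← List.mem_toFinset, htuniv]
    exact Finset.mem_univ x
  rw [Walk.support_eq_cons C]
  exact List.mem_cons_of_mem _ this
end

section
/- If G is a finite simple graph on n vertices in which every pair of nonadjacent vertices has degree sum at least n (Ore's condition, with n ≥ 3), then every longest cycle of G is a Hamilton cycle. -/
open SimpleGraph

namespace OreHelper

open List

variable {V : Type*} {G : SimpleGraph V}

/-- Build a walk from a chain of adjacencies. -/
def ofChain : ∀ (a : V) (l : List V) (b : V), List.Chain G.Adj a (l ++ [b]) → G.Walk a b
  | _, [], _, h => Walk.cons (by cases h; assumption) Walk.nil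
  | a, x :: l, b, h =>
    Walk.cons (List.chain_cons.mp h).1 (ofChain x l b (List.chain_cons.mp h).2)

lemma support_ofChain : ∀ (a : V) (l : List V) (b : V) (h : List.Chain G.Adj a (l ++ [b])),
    (ofChain a l b h).support = a :: (l ++ [b])
  | _, [], _, _ => rfl
  | a, x :: l, b, h => by
    simp only [ofChain, Walk.support_cons, cons_append]
    exact congrArg (a :: ·) (support_ofChain x l b _)

lemma chain_concat {R : V → V → Prop} :
    ∀ (a : V) (l : List V) (b : V), List.Chain R a l →
      R ((a :: l).getLast (by simp)) b → List.Chain R a (l ++ [b])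
  | a, [], b, _, hb => List.Chain.cons hb List.Chain.nil
  | a, c :: l, b, h, hb => by
    rw [List.Chain, List.chain_cons] at h
    exact List.Chain.cons h.1 (chain_concat c l b h.2 (by simpa using hb))

lemma exists_cycle_of_list (l : List V) (h3 : 3 ≤ l.length) (hnd : l.Nodup)
    (hchain : l.Chain' G.Adj)
    (hcl : G.Adj (l.getLast (by rintro rfl; simp at h3)) (l.head (by rintro rfl; simp at h3))) :
    ∃ (a : V) (c : G.Walk a a), c.IsCycle ∧ c.support.tail ~ l := by
  match l with
  | [] => simp at h3
  | [_] => simp at h3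
  | [_, _] => simp at h3
  | a :: x :: z :: l' =>
    have hchain' : List.Chain G.Adj a ((x :: z :: l') ++ [a]) := by
      refine chain_concat _ _ _ hchain ?_
      simpa using hcl
    rw [List.cons_append, List.Chain, List.chain_cons] at hchain'
    set w : G.Walk x a := ofChain x (z :: l') a hchain'.2 with hw
    have hsupp : w.support = x :: z :: l' ++ [a] := support_ofChain _ _ _ _
    have hperm : (x :: z :: l' ++ [a]) ~ a :: x :: z :: l' := by
      simpa using List.perm_append_singleton a (x :: z :: l')
    have hnd' : (x :: z :: l' ++ [a]).Nodup := hperm.nodup_iff.mpr hnd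
    simp only [List.nodup_cons, List.mem_cons] at hnd
    obtain ⟨ha, hx, hz, -⟩ := hnd
    push_neg at ha hx
    refine ⟨a, Walk.cons hchain'.1 w, ?_, ?_⟩
    · rw [Walk.cons_isCycle_iff]
      refine ⟨Walk.IsPath.mk' (by rw [hsupp]; exact hnd'), ?_⟩
      -- s(a, x) ∉ w.edges
      intro hmem
      have hwdef : w = Walk.cons (List.chain_cons.mp hchain'.2).1
          (ofChain z l' a (List.chain_cons.mp hchain'.2).2) := rfl
      rw [hwdef, Walk.edges_cons, List.mem_cons] at hmem
      rcases hmem with heq | hmem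
      · rw [Sym2.eq_iff] at heq
        rcases heq with ⟨rfl, _⟩ | ⟨rfl, _⟩
        · exact ha.1 rfl
        · exact ha.2.1 rfl
      · have := Walk.snd_mem_support_of_mem_edges _ hmem
        rw [support_ofChain z l' a (List.chain_cons.mp hchain'.2).2] at this
        simp only [List.mem_cons, List.mem_append, List.mem_singleton] at this
        rcases this with rfl | h | h
        · exact hx.1 rfl
        · exact hx.2 h
        · simp only [List.not_mem_nil, or_false] at h
          exact ha.1 h.symm
    · rw [Walk.support_cons, List.tail_cons, hsupp]
      exact hperm



lemma mem_support_tail_of_closed {a : V} (c : G.Walk a a) (hl : 0 < c.length) :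
    ∀ x ∈ c.support, x ∈ c.support.tail := by
  intro x hx
  have htail : c.support.tail ≠ [] := by
    have h2 : 2 ≤ c.support.length := by rw [c.length_support]; omega
    intro h
    rw [c.support_eq_cons, h] at h2
    simp at h2
  by_cases hxa : x ∈ c.support.tail
  · exact hxa
  · have hxa' : x = a := by
      rw [c.support_eq_cons, List.mem_cons] at hx
      tauto
    subst hxa'
    have hm := List.getLast_mem htail
    rwa [List.getLast_tail, c.getLast_support] at hm

lemma chain_of_nodup (hcomp : ∀ u w : V, u ≠ w → G.Adj u w)
    {l : List V} (h : l.Nodup) : l.Chain' G.Adj :=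
  (List.Pairwise.imp (fun hne => hcomp _ _ hne) h).isChain

lemma getLast_ne_head {l : List V} (h : l.Nodup) (h2 : 2 ≤ l.length)
    (hne : l ≠ []) : l.getLast hne ≠ l.head hne := by
  rw [List.getLast_eq_getElem, List.head_eq_getElem_zero]
  rw [Ne, h.getElem_inj_iff]
  omega

lemma complete_hamiltonian [Fintype V] (hn : 3 ≤ Fintype.card V)
    (hcomp : ∀ u w : V, u ≠ w → G.Adj u w) :
    ∃ (a : V) (c : G.Walk a a), c.IsCycle ∧ ∀ x : V, x ∈ c.support := by
  classical
  set l := (Finset.univ (α := V)).toList with hl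
  have hlen : l.length = Fintype.card V := Finset.length_toList _
  have hnd : l.Nodup := Finset.nodup_toList _
  have h3 : 3 ≤ l.length := hlen ▸ hn
  have hne : l ≠ [] := by intro h; rw [h] at h3; simp at h3
  obtain ⟨a, c, hc, hperm⟩ := exists_cycle_of_list l h3 hnd
    (chain_of_nodup hcomp hnd)
    (hcomp _ _ (getLast_ne_head hnd (by omega) hne))
  refine ⟨a, c, hc, fun x => ?_⟩
  have : x ∈ l := by rw [hl]; simp
  rw [c.support_eq_cons, List.mem_cons]
  exact Or.inr (hperm.mem_iff.mpr this)


lemma eq_nil_of_isPath_closed {u : V} {p : G.Walk u u} (hp : p.IsPath) :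
    p.length = 0 := by
  by_contra h
  have h0 : 0 < p.length := Nat.pos_of_ne_zero h
  have := mem_support_tail_of_closed p h0 u p.end_mem_support
  have hnd := hp.support_nodup
  rw [p.support_eq_cons, List.nodup_cons] at hnd
  exact hnd.1 this

lemma last_edge {u w : V} (hne : u ≠ w) :
    ∀ {x : V} (p : G.Walk x u), p.IsPath → s(u, w) ∈ p.edges →
      ∃ (h : G.Adj w u) (r : G.Walk x w), p = r.append (Walk.cons h Walk.nil)
  | x, Walk.nil, _, hmem => by simp at hmem
  | x, Walk.cons h' p', hp, hmem => by
    rename_i y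
    rw [Walk.edges_cons, List.mem_cons] at hmem
    rcases hmem with heq | hmem'
    · rw [Sym2.eq_iff] at heq
      rcases heq with ⟨hux, hwy⟩ | ⟨huy, hwx⟩
      · exfalso
        subst hux
        have hnd := hp.support_nodup
        rw [Walk.support_cons, List.nodup_cons] at hnd
        exact hnd.1 p'.end_mem_support
      · subst huy; subst hwx
        have hnil : p'.length = 0 := eq_nil_of_isPath_closed hp.of_cons
        have : p' = Walk.nil := by
          cases p' with
          | nil => rfl
          | cons h q => simp at hnil
        subst this
        exact ⟨h', Walk.nil, by simp⟩
    · obtain ⟨hadj, r', hr'⟩ := last_edge hne p' hp.of_cons hmem'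
      exact ⟨hadj, Walk.cons h' r', by rw [hr', Walk.cons_append]⟩


lemma indexOf_getElem_of_nodup [DecidableEq V] {l : List V} (h : l.Nodup)
    (i : ℕ) (hi : i < l.length) : l.idxOf l[i] = i := by
  have hmem : l[i] ∈ l := List.getElem_mem hi
  have hlt : l.idxOf l[i] < l.length := List.idxOf_lt_length_iff.mpr hmem
  exact (h.getElem_inj_iff).mp (List.getElem_idxOf hlt)

lemma getElem_idx_congr {α : Type*} {l : List α} {i j : ℕ} (h : i = j)
    {hi : i < l.length} : l[i] = l[j]'(h ▸ hi) := by subst h; rfl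

lemma crossing [Fintype V] (h3 : 3 ≤ Fintype.card V) {u w : V} (p : G.Walk u w)
    (hp : p.IsPath) (hham : ∀ x : V, x ∈ p.support) (hne : u ≠ w) (hnadj : ¬ G.Adj u w)
    (hdeg : Fintype.card V ≤ (G.neighborSet u).ncard + (G.neighborSet w).ncard) :
    ∃ (a : V) (c : G.Walk a a), c.IsCycle ∧ ∀ x : V, x ∈ c.support := by
  classical
  set n := Fintype.card V with hn
  set L := p.support with hLdef
  have hnd : L.Nodup := hp.support_nodup
  have hlen : L.length = n := le_antisymm hnd.length_le_card (by
    have hsub : (Finset.univ : Finset V) ⊆ L.toFinset :=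
      fun x _ => List.mem_toFinset.mpr (hham x)
    calc n = (Finset.univ : Finset V).card := (Finset.card_univ).symm
      _ ≤ L.toFinset.card := Finset.card_le_card hsub
      _ = L.length := List.toFinset_card_of_nodup hnd)
  have hLne : L ≠ [] := p.support_ne_nil
  have hhead : L.head hLne = u := p.head_support
  have hlast : L.getLast hLne = w := p.getLast_support
  have hgl := List.getLast_eq_getElem hLne
  have hgh := List.head_eq_getElem_zero hLne
  -- index sets
  set A := (Finset.range n).filter (fun i => G.Adj u (L.getD i u)) with hA
  set B := (Finset.range n).filter (fun i => 0 < i ∧ G.Adj w (L.getD (i-1) u)) with hB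
  have hcardA : A.card = (G.neighborSet u).ncard := by
    rw [Set.ncard_eq_toFinset_card']
    refine Finset.card_bij' (fun i _ => L.getD i u) (fun x _ => L.idxOf x) ?_ ?_ ?_ ?_
    · intro i hi
      rw [hA, Finset.mem_filter] at hi
      rw [Set.mem_toFinset]
      exact hi.2
    · intro x hx
      have hxL : x ∈ L := hham x
      have hidx : L.idxOf x < L.length := List.idxOf_lt_length_iff.mpr hxL
      show L.idxOf x ∈ A
      rw [hA, Finset.mem_filter, Finset.mem_range]
      refine ⟨by omega, ?_⟩
      rw [List.getD_eq_getElem _ _ hidx, List.getElem_idxOf]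
      exact Set.mem_toFinset.mp hx
    · intro i hi
      rw [hA, Finset.mem_filter, Finset.mem_range] at hi
      have hi' : i < L.length := by omega
      show L.idxOf (L.getD i u) = i
      rw [List.getD_eq_getElem _ _ hi']
      exact indexOf_getElem_of_nodup hnd i hi'
    · intro x hx
      have hxL : x ∈ L := hham x
      have hidx : L.idxOf x < L.length := List.idxOf_lt_length_iff.mpr hxL
      show L.getD (L.idxOf x) u = x
      rw [List.getD_eq_getElem _ _ hidx]
      exact List.getElem_idxOf hidx
  have hcardB : B.card = (G.neighborSet w).ncard := by
    rw [Set.ncard_eq_toFinset_card']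
    refine Finset.card_bij' (fun i _ => L.getD (i-1) u) (fun x _ => L.idxOf x + 1) ?_ ?_ ?_ ?_
    · intro i hi
      rw [hB, Finset.mem_filter] at hi
      rw [Set.mem_toFinset]
      exact hi.2.2
    · intro x hx
      have hadj : G.Adj w x := Set.mem_toFinset.mp hx
      have hxL : x ∈ L := hham x
      have hidx : L.idxOf x < L.length := List.idxOf_lt_length_iff.mpr hxL
      have hxw : x ≠ w := fun h => G.irrefl (h ▸ hadj)
      have hne' : L.idxOf x ≠ L.length - 1 := by
        intro h
        apply hxw
        have hgi : L[L.idxOf x] = x := List.getElem_idxOf hidx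
        calc x = L[L.idxOf x] := hgi.symm
          _ = L[L.length - 1]'(by omega) := getElem_idx_congr h
          _ = w := hgl.symm.trans hlast
      show L.idxOf x + 1 ∈ B
      rw [hB, Finset.mem_filter, Finset.mem_range]
      refine ⟨by omega, Nat.succ_pos _, ?_⟩
      simp only [Nat.add_sub_cancel]
      rw [List.getD_eq_getElem _ _ hidx, List.getElem_idxOf]
      exact hadj
    · intro i hi
      rw [hB, Finset.mem_filter, Finset.mem_range] at hi
      obtain ⟨hin, hipos, -⟩ := hi
      have hi' : i - 1 < L.length := by omega
      show L.idxOf (L.getD (i-1) u) + 1 = i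
      rw [List.getD_eq_getElem _ _ hi', indexOf_getElem_of_nodup hnd _ hi']
      omega
    · intro x hx
      have hxL : x ∈ L := hham x
      have hidx : L.idxOf x < L.length := List.idxOf_lt_length_iff.mpr hxL
      show L.getD (L.idxOf x + 1 - 1) u = x
      simp only [Nat.add_sub_cancel]
      rw [List.getD_eq_getElem _ _ hidx]
      exact List.getElem_idxOf hidx
  -- A and B live in Ico 1 n
  have hAsub : A ⊆ Finset.Ico 1 n := by
    intro i hi
    rw [hA, Finset.mem_filter, Finset.mem_range] at hi
    rw [Finset.mem_Ico]
    refine ⟨?_, hi.1⟩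
    by_contra h
    push_neg at h
    interval_cases i
    have h0 : (0 : ℕ) < L.length := by omega
    rw [List.getD_eq_getElem _ _ h0] at hi
    have : L[0] = u := hgh.symm.trans hhead
    rw [this] at hi
    exact G.irrefl hi.2
  have hBsub : B ⊆ Finset.Ico 1 n := by
    intro i hi
    rw [hB, Finset.mem_filter, Finset.mem_range] at hi
    rw [Finset.mem_Ico]
    exact ⟨hi.2.1, hi.1⟩
  have hABcard : (A ∪ B).card ≤ n - 1 := by
    calc (A ∪ B).card ≤ (Finset.Ico 1 n).card :=
          Finset.card_le_card (Finset.union_subset hAsub hBsub)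
      _ = n - 1 := Nat.card_Ico 1 n
  have hinter : (A ∩ B).Nonempty := by
    rw [Finset.nonempty_iff_ne_empty]
    intro h
    have hcui := Finset.card_union_add_card_inter A B
    rw [h, Finset.card_empty, add_zero, hcardA, hcardB] at hcui
    omega
  obtain ⟨i, hi⟩ := hinter
  rw [Finset.mem_inter, hA, hB, Finset.mem_filter, Finset.mem_filter, Finset.mem_range] at hi
  obtain ⟨⟨hin, hAu⟩, -, hipos, hBw⟩ := hi
  have hiL : i < L.length := by omega
  have hiL' : i - 1 < L.length := by omega
  rw [List.getD_eq_getElem _ _ hiL] at hAu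
  rw [List.getD_eq_getElem _ _ hiL'] at hBw
  -- i < n - 1
  have hitop : i < n - 1 := by
    rcases Nat.lt_or_ge i (n-1) with h | h
    · exact h
    · exfalso
      have hieq : i = L.length - 1 := by omega
      apply hnadj
      have hLiw : L[i] = w :=
        (getElem_idx_congr hieq).trans (hgl.symm.trans hlast)
      exact hLiw ▸ hAu
  -- the rotated list
  set l₂ := L.take i ++ (L.drop i).reverse with hl₂
  have htklen : (L.take i).length = i := by
    rw [List.length_take]; omega
  have htake_ne : L.take i ≠ [] := by
    intro h
    rw [h] at htklen
    simp at htklen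
    omega
  have hdplen : (L.drop i).length = L.length - i := List.length_drop
  have hdrop_ne : L.drop i ≠ [] := by
    intro h
    rw [h] at hdplen
    simp at hdplen
    omega
  have hrevne : (L.drop i).reverse ≠ [] := by simpa using hdrop_ne
  have hl₂ne : l₂ ≠ [] := by
    intro h
    rcases List.append_eq_nil_iff.mp h with ⟨h1, -⟩
    exact htake_ne h1
  have hperm₂ : l₂ ~ L := by
    have h1 : l₂ ~ L.take i ++ L.drop i :=
      List.Perm.append_left _ (List.reverse_perm _)
    rwa [List.take_append_drop] at h1
  have hchainL : L.Chain' G.Adj := p.isChain_adj_support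
  have hchain₂ : l₂.Chain' G.Adj := by
    rw [hl₂, List.Chain', List.isChain_append]
    refine ⟨List.IsChain.take hchainL i, ?_, ?_⟩
    · rw [List.isChain_reverse]
      exact List.IsChain.imp (fun a b h => h.symm) (List.IsChain.drop hchainL i)
    · intro x hx y hy
      rw [List.getLast?_eq_getLast htake_ne, Option.mem_some_iff] at hx
      rw [List.head?_reverse, List.getLast?_eq_getLast hdrop_ne, Option.mem_some_iff] at hy
      have hxval : x = L[i-1]'hiL' := by
        rw [← hx, List.getLast_eq_getElem]
        calc (L.take i)[(L.take i).length - 1]'(by omega) =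
              (L.take i)[i - 1]'(by omega) := getElem_idx_congr (by omega)
          _ = L[i-1]'hiL' := List.getElem_take
      have hyval : y = w := by
        rw [← hy, List.getLast_eq_getElem]
        calc (L.drop i)[(L.drop i).length - 1]'(by omega) =
              L[i + ((L.drop i).length - 1)]'(by omega) := List.getElem_drop
          _ = L[L.length - 1]'(by omega) := getElem_idx_congr (by omega)
          _ = w := hgl.symm.trans hlast
      rw [hxval, hyval]
      exact hBw.symm
  have h0t : 0 < (L.take i).length := by omega
  have h0l : 0 < l₂.length := List.length_pos_iff.mpr hl₂ne
  have hhead₂ : l₂.head hl₂ne = u := by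
    have e0 : l₂.head hl₂ne = l₂[0] := List.head_eq_getElem_zero hl₂ne
    have e1 : l₂[0]'h0l = (L.take i)[0]'h0t := List.getElem_append_left h0t
    have e2 : (L.take i)[0]'h0t = L[0]'(by omega) := List.getElem_take
    exact e0.trans (e1.trans (e2.trans (hgh.symm.trans hhead)))
  have hlast₂ : l₂.getLast hl₂ne = L[i] := by
    have e1 : l₂.getLast hl₂ne = (L.drop i).reverse.getLast hrevne := by
      show (L.take i ++ (L.drop i).reverse).getLast hl₂ne = _
      rw [List.getLast_append]
      rw [dif_neg (by simpa using hdrop_ne)]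
    have e2 : (L.drop i).reverse.getLast hrevne = (L.drop i).head hdrop_ne :=
      List.getLast_reverse _
    have e3 : (L.drop i).head hdrop_ne = (L.drop i)[0]'(by omega) :=
      List.head_eq_getElem_zero _
    have e4 : (L.drop i)[0]'(by omega) = L[i + 0]'(by omega) := List.getElem_drop
    have e5 : L[i + 0]'(by omega) = L[i]'hiL := getElem_idx_congr (by omega)
    exact e1.trans (e2.trans (e3.trans (e4.trans e5)))
  have hlen₂ : l₂.length = n := by rw [hperm₂.length_eq, hlen]
  obtain ⟨a, c, hc, hctail⟩ := exists_cycle_of_list l₂ (by omega)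
    (hperm₂.nodup_iff.mpr hnd) hchain₂ (by rw [hlast₂, hhead₂]; exact hAu.symm)
  refine ⟨a, c, hc, fun x => ?_⟩
  rw [c.support_eq_cons, List.mem_cons]
  exact Or.inr (hctail.mem_iff.mpr (hperm₂.mem_iff.mpr (hham x)))


lemma split_at_edge {u w : V} (huw : u ≠ w) (c₂ : G.Walk u u) (hcyc : c₂.IsCycle)
    (hedge : s(u,w) ∈ c₂.edges) (hham : ∀ x : V, x ∈ c₂.support) :
    ∃ (q : G.Walk u w), q.IsPath ∧ (∀ x : V, x ∈ q.support) ∧ s(u,w) ∉ q.edges := by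
  cases c₂ with
  | nil => simp at hedge
  | cons h p =>
    rename_i x
    rw [Walk.cons_isCycle_iff] at hcyc
    obtain ⟨hp, hnotmem⟩ := hcyc
    rw [Walk.edges_cons, List.mem_cons] at hedge
    by_cases hwx : w = x
    · subst hwx
      refine ⟨p.reverse, hp.reverse, ?_, ?_⟩
      · intro y
        have hy := hham y
        rw [Walk.support_cons, List.mem_cons] at hy
        rw [Walk.support_reverse, List.mem_reverse]
        rcases hy with rfl | hy
        · exact p.end_mem_support
        · exact hy
      · rw [Walk.edges_reverse, List.mem_reverse]
        exact hnotmem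
    · have hmem' : s(u,w) ∈ p.edges := by
        rcases hedge with heq | hm
        · exfalso
          rw [Sym2.eq_iff] at heq
          rcases heq with ⟨-, h2⟩ | ⟨-, h2⟩
          · exact hwx h2
          · exact huw h2.symm
        · exact hm
      obtain ⟨hadj, r, hr⟩ := last_edge huw p hp hmem'
      have hpsupp : p.support = r.support ++ [u] := by
        rw [hr, Walk.support_append]
        simp
      have hpnd := hp.support_nodup
      rw [hpsupp, List.nodup_append] at hpnd
      obtain ⟨hrnd, -, hdisj⟩ := hpnd
      have hur : u ∉ r.support := fun hu => hdisj _ hu _ (by simp) rfl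
      have hpedges : p.edges = r.edges ++ [s(w,u)] := by
        rw [hr, Walk.edges_append]
        simp
      refine ⟨Walk.cons h r, ?_, ?_, ?_⟩
      · apply Walk.IsPath.mk'
        rw [Walk.support_cons, List.nodup_cons]
        exact ⟨hur, hrnd⟩
      · intro y
        have hy := hham y
        rw [Walk.support_cons, List.mem_cons] at hy ⊢
        rcases hy with rfl | hy
        · exact Or.inl rfl
        · rw [hpsupp, List.mem_append, List.mem_singleton] at hy
          rcases hy with hy | rfl
          · exact Or.inr hy
          · exact Or.inl rfl
      · rw [Walk.edges_cons, List.mem_cons]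
        rintro (heq | hm)
        · rw [Sym2.eq_iff] at heq
          rcases heq with ⟨-, h2⟩ | ⟨-, h2⟩
          · exact hwx h2
          · exact huw h2.symm
        · have htrail := hp.isTrail.edges_nodup
          rw [hpedges, List.nodup_append] at htrail
          obtain ⟨-, -, hd⟩ := htrail
          exact hd _ hm _ (List.mem_singleton_self _) Sym2.eq_swap


lemma ore_hamiltonian [Fintype V] (hn : 3 ≤ Fintype.card V) :
    ∀ (m : ℕ) (G : SimpleGraph V), Gᶜ.edgeSet.ncard ≤ m →
      (∀ u w : V, u ≠ w → ¬ G.Adj u w →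
        Fintype.card V ≤ (G.neighborSet u).ncard + (G.neighborSet w).ncard) →
      ∃ (a : V) (c : G.Walk a a), c.IsCycle ∧ ∀ x : V, x ∈ c.support := by
  intro m
  induction m with
  | zero =>
    intro G hcard _
    apply complete_hamiltonian hn
    intro u w huw
    by_contra hadj
    have hmem : s(u,w) ∈ Gᶜ.edgeSet := by
      rw [mem_edgeSet, compl_adj]; exact ⟨huw, hadj⟩
    have hpos : 0 < Gᶜ.edgeSet.ncard := (Set.ncard_pos (Set.toFinite _)).mpr ⟨_, hmem⟩
    omega
  | succ m ih =>
    intro G hcard hOre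
    by_cases hcomp : ∀ u w : V, u ≠ w → G.Adj u w
    · exact complete_hamiltonian hn hcomp
    · push_neg at hcomp
      obtain ⟨u, w, huw, hadj⟩ := hcomp
      classical
      set G' := G ⊔ edge u w with hG'
      have hGle : G ≤ G' := le_sup_left
      have hadj' : G'.Adj u w := by
        rw [hG', sup_adj, edge_adj]
        exact Or.inr ⟨Or.inl ⟨rfl, rfl⟩, huw⟩
      have hmemc : s(u,w) ∈ Gᶜ.edgeSet := by
        rw [mem_edgeSet, compl_adj]; exact ⟨huw, hadj⟩
      have hsub : G'ᶜ.edgeSet ⊆ Gᶜ.edgeSet \ {s(u,w)} := by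
        intro e he
        induction e using Sym2.ind with
        | _ x y =>
          rw [mem_edgeSet, compl_adj] at he
          rw [Set.mem_diff]
          refine ⟨by rw [mem_edgeSet, compl_adj]; exact ⟨he.1, fun h => he.2 (hGle h)⟩, ?_⟩
          intro hmem
          rw [Set.mem_singleton_iff] at hmem
          apply he.2
          rw [← mem_edgeSet, hmem, mem_edgeSet]
          exact hadj'
      have hcard' : G'ᶜ.edgeSet.ncard ≤ m := by
        have hfinc : (Gᶜ.edgeSet).Finite := Set.toFinite _
        have h1 : G'ᶜ.edgeSet.ncard ≤ (Gᶜ.edgeSet \ {s(u,w)}).ncard :=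
          Set.ncard_le_ncard hsub (hfinc.diff)
        have h2 : (Gᶜ.edgeSet \ {s(u,w)}).ncard < Gᶜ.edgeSet.ncard :=
          Set.ncard_diff_singleton_lt_of_mem hmemc hfinc
        omega
      have hOre' : ∀ a b : V, a ≠ b → ¬ G'.Adj a b →
          Fintype.card V ≤ (G'.neighborSet a).ncard + (G'.neighborSet b).ncard := by
        intro a b hab hnadj
        have hnadjG : ¬ G.Adj a b := fun h => hnadj (hGle h)
        have hmono : ∀ x : V, (G.neighborSet x).ncard ≤ (G'.neighborSet x).ncard :=
          fun x => Set.ncard_le_ncard (fun y hy => hGle hy) (Set.toFinite _)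
        calc Fintype.card V ≤ _ := hOre a b hab hnadjG
          _ ≤ _ := Nat.add_le_add (hmono a) (hmono b)
      obtain ⟨a, c, hc, hham⟩ := ih G' hcard' hOre'
      have hedgeuw : (edge u w).edgeSet = {s(u,w)} := by
        rw [edge, edgeSet_fromEdgeSet]
        ext e
        simp only [Set.mem_diff, Set.mem_singleton_iff, Set.mem_setOf_eq]
        constructor
        · rintro ⟨h1, -⟩; exact h1
        · rintro rfl
          refine ⟨rfl, ?_⟩
          rw [Sym2.mem_diagSet, Sym2.mk_isDiag_iff]
          exact huw
      by_cases hedge : s(u,w) ∈ c.edges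
      · -- the new edge is used: split into a Hamilton path of G and apply crossing
        have hu : u ∈ c.support := hham u
        have hc₂cyc : (c.rotate u hu).IsCycle := hc.rotate hu
        have hedge₂ : s(u,w) ∈ (c.rotate u hu).edges :=
          ((Walk.rotate_edges c u hu).perm.mem_iff).mpr hedge
        have hham₂ : ∀ x : V, x ∈ (c.rotate u hu).support := by
          intro x
          have h1 : x ∈ c.support.tail :=
            mem_support_tail_of_closed c (by have := hc.three_le_length; omega) x (hham x)
          have h2 := Walk.support_rotate c u hu
          exact List.mem_of_mem_tail ((h2.perm.mem_iff).mpr h1)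
        obtain ⟨q, hq, hqham, hqedge⟩ := split_at_edge huw (c.rotate u hu) hc₂cyc hedge₂ hham₂
        have hqsub : ∀ e ∈ q.edges, e ∈ G.edgeSet := by
          intro e he
          have h1 : e ∈ G'.edgeSet := q.edges_subset_edgeSet he
          rw [hG', edgeSet_sup, hedgeuw] at h1
          rcases h1 with h1 | h1
          · exact h1
          · rw [Set.mem_singleton_iff] at h1
            exact absurd (h1 ▸ he) hqedge
        refine crossing hn (q.transfer G hqsub) (hq.transfer hqsub) ?_ huw hadj
          (hOre u w huw hadj)
        intro x
        rw [Walk.support_transfer]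
        exact hqham x
      · -- the new edge is unused: the cycle already lives in G
        have hGsub : ∀ e ∈ c.edges, e ∈ G.edgeSet := by
          intro e he
          have h1 : e ∈ G'.edgeSet := c.edges_subset_edgeSet he
          rw [hG', edgeSet_sup, hedgeuw] at h1
          rcases h1 with h1 | h1
          · exact h1
          · rw [Set.mem_singleton_iff] at h1
            exact absurd (h1 ▸ he) hedge
        refine ⟨a, c.transfer G hGsub, hc.transfer _, fun x => ?_⟩
        rw [Walk.support_transfer]
        exact hham x

end OreHelper


open OreHelper

/-- Ore: if `n ≥ 3` and every pair of distinct nonadjacent vertices has degree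
sum at least `n`, then every longest cycle is a Hamilton cycle. -/
theorem stmt_7 {V : Type*} [Fintype V] (G : SimpleGraph V)
    [DecidableRel G.Adj] (hn : 3 ≤ Fintype.card V)
    (hOre : ∀ u w : V, u ≠ w → ¬ G.Adj u w →
      Fintype.card V ≤ G.degree u + G.degree w)
    (v : V) (C : G.Walk v v) (hC : C.IsCycle)
    (hmax : ∀ (u : V) (Q : G.Walk u u), Q.IsCycle → Q.length ≤ C.length) :
    ∀ x : V, x ∈ C.support := by
  classical
  intro x
  have hdeg : ∀ u : V, (G.neighborSet u).ncard = G.degree u := by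
    intro u
    rw [SimpleGraph.degree, neighborFinset_def, ← Set.ncard_eq_toFinset_card']
  have hOre' : ∀ u w : V, u ≠ w → ¬ G.Adj u w →
      Fintype.card V ≤ (G.neighborSet u).ncard + (G.neighborSet w).ncard := by
    intro u w h1 h2
    rw [hdeg u, hdeg w]
    exact hOre u w h1 h2
  obtain ⟨a, hc, hcyc, hham⟩ :=
    ore_hamiltonian hn (Gᶜ.edgeSet.ncard) G le_rfl hOre'
  have h3 := hcyc.three_le_length
  have hcl : Fintype.card V ≤ hc.length := by
    have htail : ∀ y : V, y ∈ hc.support.tail :=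
      fun y => mem_support_tail_of_closed hc (by omega) y (hham y)
    have hnd : hc.support.tail.Nodup := hcyc.support_nodup
    calc Fintype.card V = (Finset.univ : Finset V).card := Finset.card_univ.symm
      _ ≤ hc.support.tail.toFinset.card :=
          Finset.card_le_card (fun y _ => List.mem_toFinset.mpr (htail y))
      _ = hc.support.tail.length := List.toFinset_card_of_nodup hnd
      _ = hc.length := by
          rw [List.length_tail, hc.length_support]
          omega
  have hCn : Fintype.card V ≤ C.length := le_trans hcl (hmax _ _ hcyc)
  have hndC : C.support.tail.Nodup := hC.support_nodup
  have hlenC : C.support.tail.length = C.length := by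
    rw [List.length_tail, C.length_support]
    omega
  have hlen_le : C.support.tail.length ≤ Fintype.card V := hndC.length_le_card
  have huniv : C.support.tail.toFinset = Finset.univ := by
    apply Finset.eq_univ_of_card
    rw [List.toFinset_card_of_nodup hndC]
    omega
  have hx : x ∈ C.support.tail := by
    rw [← List.mem_toFinset, huniv]
    exact Finset.mem_univ x
  exact List.mem_of_mem_tail hx
end

section
/- For real numbers n, δ and integers λ, μ with μ = δ − λ + 1, the inequality δ ≥ (n+2)/(λ+1) + λ − 2 holds if and only if δ ≥ (n+2)/(μ+1) + μ − 2. -/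
/-- The degree condition `δ ≥ (n+2)/(λ+1) + λ − 2` is symmetric under the
substitution `μ = δ − λ + 1`. -/
theorem stmt_19 (n : ℝ) (δ l μ : ℤ) (hl : 0 < l) (hμ : 0 < μ)
    (hrel : μ = δ - l + 1) (hn : 0 < n + 2) :
    ((n + 2) / ((l : ℝ) + 1) + l - 2 ≤ (δ : ℝ)) ↔
      ((n + 2) / ((μ : ℝ) + 1) + μ - 2 ≤ (δ : ℝ)) := by
  have hl' : (0:ℝ) < (l:ℝ) + 1 := by positivity
  have hμ' : (0:ℝ) < (μ:ℝ) + 1 := by positivity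
  have hrel' : (μ:ℝ) = (δ:ℝ) - l + 1 := by exact_mod_cast congrArg (Int.cast : ℤ → ℝ) hrel
  have key : ∀ a : ℝ, 0 < a + 1 →
      ((n + 2) / (a + 1) + a - 2 ≤ (δ:ℝ) ↔ n + 2 ≤ ((δ:ℝ) - a + 2) * (a + 1)) := by
    intro a ha
    rw [div_add' _ _ _ (ne_of_gt ha), sub_le_iff_le_add, div_le_iff₀ ha]
    constructor <;> intro h <;> nlinarith
  rw [key _ hl', key _ hμ']
  constructor <;> intro h <;> nlinarith
end
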